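/- Let p and q be odd integers with 5 ≤ p ≤ q, and let H⁻(p,q) be the presented group on generators a,b,α,β with relators α^{-1}a^{(p-1)/2}, β^{-1}b^{(q-1)/2}, aβb^{-1}aβ(αbαβ)^2, and αba^{-1}αb(αβaβ)^2. Then there is a surjective group homomorphism from H⁻(p,q) onto Coxeter's group G^{5,p,q} sending α to A, β to B^{-1}, a to A^{-2}, and b to B^2. -/

import Mathlib

/-- The relators of the group `H⁻(p,q)` on generators
`a = of 0`, `b = of 1`, `α = of 2`, `β = of 3`. -/
def HminusRels (p q : ℤ) : Set (FreeGroup (Fin 4)) :=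
  let a : FreeGroup (Fin 4) := FreeGroup.of 0
  let b : FreeGroup (Fin 4) := FreeGroup.of 1
  let al : FreeGroup (Fin 4) := FreeGroup.of 2
  let be : FreeGroup (Fin 4) := FreeGroup.of 3
  { al⁻¹ * a ^ ((p - 1) / 2), be⁻¹ * b ^ ((q - 1) / 2),
    a * be * b⁻¹ * a * be * (al * b * al * be) ^ 2,
    al * b * a⁻¹ * al * b * (al * be * a * be) ^ 2 }

/-- The relators of Coxeter's group `G^{m,p,q}` on generators
`A = of 0`, `B = of 1`, `C = of 2`. -/
def coxeterGRels (m p q : ℤ) : Set (FreeGroup (Fin 3)) :=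
  let A : FreeGroup (Fin 3) := FreeGroup.of 0
  let B : FreeGroup (Fin 3) := FreeGroup.of 1
  let C : FreeGroup (Fin 3) := FreeGroup.of 2
  { A ^ p, B ^ q, C ^ m, (A * B) ^ 2, (B * C) ^ 2, (C * A) ^ 2, (A * B * C) ^ 2 }

section Aux
variable {G : Type*} [Group G]

private lemma conj_rel {x y : G} (h : x*y*x*y = 1) : y*x*y = x⁻¹ :=
  eq_inv_of_mul_eq_one_left (by rw [show (y*x*y)*x = x⁻¹*(x*y*x*y)*x by group, h]; group)

private lemma swap_rel {x y : G} (h : x*y*x*y = 1) : y*x*y*x = 1 := by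
  rw [show y*x*y*x = x⁻¹*(x*y*x*y)*x by group, h]; group

/-- The main computation in `G^{5,p,q}`: the images of the last two relators of
`H⁻(p,q)` are trivial, and `C` is a word in `A` and `B`. -/
lemma coxeterCalc (A B C : G) (hC5 : C*C*C*C*C = 1)
    (hAB : A*B*A*B = 1) (hBC : B*C*B*C = 1) (hCA : C*A*C*A = 1)
    (hABC : A*B*C*A*B*C = 1) :
    ((A*A)⁻¹*B⁻¹*(B*B)⁻¹*(A*A)⁻¹*B⁻¹*((A*(B*B)*A*B⁻¹)*(A*(B*B)*A*B⁻¹)) = 1) ∧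
    (A*(B*B)*(A*A)*A*(B*B)*((A*B⁻¹*(A*A)⁻¹*B⁻¹)*(A*B⁻¹*(A*A)⁻¹*B⁻¹)) = 1) ∧
    (C = A*A*(B*B)*(A*A*(B*B))) := by
  have hCAC : C*A*C = A⁻¹ := conj_rel (swap_rel hCA)
  have hACA : A*C*A = C⁻¹ := conj_rel hCA
  have hABA : A*B*A = B⁻¹ := conj_rel (swap_rel hAB)
  have hBAB : B*A*B = A⁻¹ := conj_rel hAB
  have hBCB : B*C*B = C⁻¹ := conj_rel (swap_rel hBC)
  have hCinv : C⁻¹ = A*B*C*A*B :=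
    (eq_inv_of_mul_eq_one_left (by rw [show (A*B*C*A*B)*C = A*B*C*A*B*C by group, hABC])).symm
  have main : C*C*(A*A)*(B*B) = 1 := by
    calc C*C*(A*A)*(B*B)
        = C*(C*A*C)*(C⁻¹*A*B*B) := by group
      _ = C*A⁻¹*(A*B*C*A*B)*(A*B*B) := by rw [hCAC, hCinv]; group
      _ = C*B*C*(A*B*A)*(B*B) := by group
      _ = C*B*C*B⁻¹*(B*B) := by rw [hABA]
      _ = C*B*C*B := by group
      _ = 1 := swap_rel hBC
  have hE : C*C = (B*B)⁻¹*(A*A)⁻¹ := by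
    calc C*C = (C*C*(A*A)*(B*B))*((B*B)⁻¹*(A*A)⁻¹) := by group
      _ = (B*B)⁻¹*(A*A)⁻¹ := by rw [main]; group
  have hE2 : A*A*(B*B) = (C*C)⁻¹ := by
    calc A*A*(B*B) = ((B*B)⁻¹*(A*A)⁻¹)⁻¹ := by simp [mul_assoc]
      _ = (C*C)⁻¹ := by rw [hE]
  have h5i : C⁻¹*C⁻¹*C⁻¹*C⁻¹*C⁻¹ = 1 := by
    calc C⁻¹*C⁻¹*C⁻¹*C⁻¹*C⁻¹ = (C*C*C*C*C)⁻¹ := by group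
      _ = 1 := by rw [hC5]; group
  have hC4 : C*C*(C*C) = C⁻¹ :=
    eq_inv_of_mul_eq_one_left (by rw [show (C*C*(C*C))*C = C*C*C*C*C by group, hC5])
  have hC3 : C*(C*C) = (C*C)⁻¹ :=
    eq_inv_of_mul_eq_one_left (by rw [show (C*(C*C))*(C*C) = C*C*C*C*C by group, hC5])
  have hC4i : (C*C)⁻¹*(C*C)⁻¹ = C := by
    calc (C*C)⁻¹*(C*C)⁻¹ = (C⁻¹*C⁻¹*C⁻¹*C⁻¹*C⁻¹)*C := by group
      _ = C := by rw [h5i]; group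
  have hBCBi : B⁻¹*C⁻¹*B⁻¹ = C := by
    calc B⁻¹*C⁻¹*B⁻¹ = (B*C*B)⁻¹ := by group
      _ = (C⁻¹)⁻¹ := by rw [hBCB]
      _ = C := inv_inv C
  refine ⟨?_, ?_, ?_⟩
  · calc (A*A)⁻¹*B⁻¹*(B*B)⁻¹*(A*A)⁻¹*B⁻¹*((A*(B*B)*A*B⁻¹)*(A*(B*B)*A*B⁻¹))
        = (A*A)⁻¹*B⁻¹*(B*B)⁻¹*(A*A)⁻¹*B⁻¹*((A*B*(B*A*B)*B⁻¹*B⁻¹)*(A*B*(B*A*B)*B⁻¹*B⁻¹)) := by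
          group
      _ = (A*A)⁻¹*B⁻¹*(B*B)⁻¹*(A*A)⁻¹*B⁻¹*((A*B*A⁻¹*B⁻¹*B⁻¹)*(A*B*A⁻¹*B⁻¹*B⁻¹)) := by
          rw [hBAB]
      _ = (A*A)⁻¹*B⁻¹*(B*B)⁻¹*(A*A)⁻¹*B⁻¹*(((A*B*A)*(A*A)⁻¹*(B*B)⁻¹)*((A*B*A)*(A*A)⁻¹*(B*B)⁻¹)) := by
          group
      _ = (A*A)⁻¹*B⁻¹*(B*B)⁻¹*(A*A)⁻¹*B⁻¹*((B⁻¹*(A*A)⁻¹*(B*B)⁻¹)*(B⁻¹*(A*A)⁻¹*(B*B)⁻¹)) := by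
          rw [hABA]
      _ = (A*A)⁻¹*B⁻¹*((B*B)⁻¹*(A*A)⁻¹)*((B*B)⁻¹*(A*A)⁻¹)*B⁻¹*((B*B)⁻¹*(A*A)⁻¹)*(B*B)⁻¹ := by
          group
      _ = (A*A)⁻¹*B⁻¹*(C*C)*(C*C)*B⁻¹*(C*C)*(B*B)⁻¹ := by rw [← hE]
      _ = (A*A)⁻¹*B⁻¹*(C*C*(C*C))*B⁻¹*(C*C)*(B*B)⁻¹ := by group
      _ = (A*A)⁻¹*B⁻¹*C⁻¹*B⁻¹*(C*C)*(B*B)⁻¹ := by rw [hC4]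
      _ = (A*A)⁻¹*(B⁻¹*C⁻¹*B⁻¹)*(C*C)*(B*B)⁻¹ := by group
      _ = (A*A)⁻¹*(C*(C*C))*(B*B)⁻¹ := by rw [hBCBi]; group
      _ = (A*A)⁻¹*((C*C)⁻¹)*(B*B)⁻¹ := by rw [hC3]
      _ = (A*A)⁻¹*(A*A*(B*B))*(B*B)⁻¹ := by rw [← hE2]
      _ = 1 := by group
  · have hBAi : B⁻¹*A⁻¹ = A*B := by
      have h2 : A*B = (A*B)⁻¹ :=
        eq_inv_of_mul_eq_one_left (by rw [show (A*B)*(A*B) = A*B*A*B by group, hAB])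
      calc B⁻¹*A⁻¹ = (A*B)⁻¹ := by group
        _ = A*B := h2.symm
    have hBA2 : B*A⁻¹ = B*B*A*B := by
      calc B*A⁻¹ = B*(B*A*B) := by rw [hBAB]
        _ = B*B*A*B := by group
    calc A*(B*B)*(A*A)*A*(B*B)*((A*B⁻¹*(A*A)⁻¹*B⁻¹)*(A*B⁻¹*(A*A)⁻¹*B⁻¹))
        = A*(B*B)*(A*A)*A*(B*B)*((A*(B⁻¹*A⁻¹)*(A⁻¹*B⁻¹))*(A*(B⁻¹*A⁻¹)*(A⁻¹*B⁻¹))) := by group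
      _ = A*(B*B)*(A*A)*A*(B*B)*((A*(A*B)*(A⁻¹*B⁻¹))*(A*(A*B)*(A⁻¹*B⁻¹))) := by rw [hBAi]
      _ = A*(B*B)*(A*A)*A*(B*B)*((A*A*(B*A⁻¹)*B⁻¹)*(A*A*(B*A⁻¹)*B⁻¹)) := by group
      _ = A*(B*B)*(A*A)*A*(B*B)*((A*A*(B*B*A*B)*B⁻¹)*(A*A*(B*B*A*B)*B⁻¹)) := by rw [hBA2]
      _ = A⁻¹*(A*A*(B*B))*A*(A*A*(B*B))*(A*A*(B*B))*A*(A*A*(B*B))*A := by group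
      _ = A⁻¹*(C*C)⁻¹*A*((C*C)⁻¹*(C*C)⁻¹)*A*(C*C)⁻¹*A := by rw [hE2]; group
      _ = A⁻¹*(C*C)⁻¹*(A*C*A)*(C*C)⁻¹*A := by rw [hC4i]; group
      _ = A⁻¹*(C*C)⁻¹*C⁻¹*(C*C)⁻¹*A := by rw [hACA]
      _ = A⁻¹*(C⁻¹*C⁻¹*C⁻¹*C⁻¹*C⁻¹)*A := by group
      _ = 1 := by rw [h5i]; group
  · calc C = (C*C)⁻¹*(C*C)⁻¹ := hC4i.symm
      _ = A*A*(B*B)*(A*A*(B*B)) := by rw [← hE2]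

end Aux

/-- The images of the generators `a, b, α, β` of `H⁻(p,q)` in `G^{5,p,q}`. -/
def fvec (p q : ℤ) : Fin 4 → PresentedGroup (coxeterGRels 5 p q)
  | 0 => ((PresentedGroup.of 0 : PresentedGroup (coxeterGRels 5 p q)) *
          PresentedGroup.of 0)⁻¹
  | 1 => (PresentedGroup.of 1 : PresentedGroup (coxeterGRels 5 p q)) * PresentedGroup.of 1
  | 2 => PresentedGroup.of 0
  | 3 => (PresentedGroup.of 1 : PresentedGroup (coxeterGRels 5 p q))⁻¹

@[simp] lemma fvec_zero (p q : ℤ) :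
    fvec p q 0 = ((PresentedGroup.of 0 : PresentedGroup (coxeterGRels 5 p q)) *
      PresentedGroup.of 0)⁻¹ := rfl
@[simp] lemma fvec_one (p q : ℤ) :
    fvec p q 1 = (PresentedGroup.of 1 : PresentedGroup (coxeterGRels 5 p q)) *
      PresentedGroup.of 1 := rfl
@[simp] lemma fvec_two (p q : ℤ) :
    fvec p q 2 = (PresentedGroup.of 0 : PresentedGroup (coxeterGRels 5 p q)) := rfl
@[simp] lemma fvec_three (p q : ℤ) :
    fvec p q 3 = (PresentedGroup.of 1 : PresentedGroup (coxeterGRels 5 p q))⁻¹ := rfl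

/-- For `p,q` odd with `5 ≤ p ≤ q`, `H⁻(p,q)` surjects onto Coxeter's group `G^{5,p,q}`,
sending `α ↦ A`, `β ↦ B⁻¹`, `a ↦ A⁻²`, `b ↦ B²`. -/
theorem Hminus_surjects_onto_G5pq (p q : ℤ) (hp : Odd p) (hq : Odd q)
    (hp5 : 5 ≤ p) (hpq : p ≤ q) :
    ∃ f : PresentedGroup (HminusRels p q) →* PresentedGroup (coxeterGRels 5 p q),
      Function.Surjective f ∧
      f (PresentedGroup.of 2) = PresentedGroup.of 0 ∧
      f (PresentedGroup.of 3) = (PresentedGroup.of 1)⁻¹ ∧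
      f (PresentedGroup.of 0) = (PresentedGroup.of 0) ^ (-2 : ℤ) ∧
      f (PresentedGroup.of 1) = (PresentedGroup.of 1) ^ 2 := by
  have hrel : ∀ r ∈ coxeterGRels 5 p q, PresentedGroup.mk (coxeterGRels 5 p q) r = 1 :=
    fun r hr => (QuotientGroup.eq_one_iff r).mpr (Subgroup.subset_normalClosure hr)
  set A : PresentedGroup (coxeterGRels 5 p q) := PresentedGroup.of 0 with hAdef
  set B : PresentedGroup (coxeterGRels 5 p q) := PresentedGroup.of 1 with hBdef
  set C : PresentedGroup (coxeterGRels 5 p q) := PresentedGroup.of 2 with hCdef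
  have hA : A ^ p = 1 := by
    have h := hrel _ (show (FreeGroup.of 0 : FreeGroup (Fin 3))^p ∈ _ by simp [coxeterGRels])
    simp [map_zpow] at h; exact h
  have hB : B ^ q = 1 := by
    have h := hrel _ (show (FreeGroup.of 1 : FreeGroup (Fin 3))^q ∈ _ by simp [coxeterGRels])
    simp [map_zpow] at h; exact h
  have hC : C*C*C*C*C = 1 := by
    have h := hrel _ (show (FreeGroup.of 2 : FreeGroup (Fin 3))^(5:ℤ) ∈ _ by simp [coxeterGRels])
    rw [map_zpow, show (5:ℤ) = ((5:ℕ):ℤ) by norm_num, zpow_natCast] at h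
    simp [pow_succ, mul_assoc] at h; exact h
  have hAB : A*B*A*B = 1 := by
    have h := hrel _
      (show (FreeGroup.of 0 * FreeGroup.of 1 : FreeGroup (Fin 3))^2 ∈ _ by simp [coxeterGRels])
    rw [map_pow, map_mul] at h
    simp [pow_succ, mul_assoc] at h; exact h
  have hBC : B*C*B*C = 1 := by
    have h := hrel _
      (show (FreeGroup.of 1 * FreeGroup.of 2 : FreeGroup (Fin 3))^2 ∈ _ by simp [coxeterGRels])
    rw [map_pow, map_mul] at h
    simp [pow_succ, mul_assoc] at h; exact h
  have hCA : C*A*C*A = 1 := by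
    have h := hrel _
      (show (FreeGroup.of 2 * FreeGroup.of 0 : FreeGroup (Fin 3))^2 ∈ _ by simp [coxeterGRels])
    rw [map_pow, map_mul] at h
    simp [pow_succ, mul_assoc] at h; exact h
  have hABC : A*B*C*A*B*C = 1 := by
    have h := hrel _
      (show (FreeGroup.of 0 * FreeGroup.of 1 * FreeGroup.of 2 : FreeGroup (Fin 3))^2 ∈ _ by
        simp [coxeterGRels])
    rw [map_pow, map_mul, map_mul] at h
    simp [pow_succ, mul_assoc] at h; exact h
  obtain ⟨hrel3, hrel4, hCgen⟩ := coxeterCalc A B C hC hAB hBC hCA hABC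
  -- the images satisfy the relations of H⁻(p,q)
  have hrels : ∀ r ∈ HminusRels p q, FreeGroup.lift (fvec p q) r = 1 := by
    intro r hr
    have hp2 : p % 2 = 1 := Int.odd_iff.mp hp
    have hq2 : q % 2 = 1 := Int.odd_iff.mp hq
    simp only [HminusRels, Set.mem_insert_iff, Set.mem_singleton_iff] at hr
    rcases hr with rfl | rfl | rfl | rfl
    · simp only [map_mul, map_inv, map_zpow, FreeGroup.lift_apply_of, fvec_zero, fvec_two]
      rw [show ((A*A)⁻¹ : PresentedGroup (coxeterGRels 5 p q)) = A^(-2:ℤ) by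
            rw [show (-2:ℤ) = -((2:ℕ):ℤ) by norm_num, zpow_neg, zpow_natCast, pow_two],
          ← zpow_mul, ← zpow_neg_one A, ← zpow_add,
          show (-1 + -2 * ((p-1)/2) : ℤ) = -p by omega, zpow_neg, hA, inv_one]
    · simp only [map_mul, map_inv, map_zpow, FreeGroup.lift_apply_of, fvec_one, fvec_three, inv_inv]
      rw [show ((B*B : PresentedGroup (coxeterGRels 5 p q))) = B^(2:ℤ) by
            rw [show (2:ℤ) = ((2:ℕ):ℤ) by norm_num, zpow_natCast, pow_two],
          ← zpow_mul, mul_self_zpow,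
          show (2 * ((q-1)/2) + 1 : ℤ) = q by omega, hB]
    · simp only [map_mul, map_inv, map_pow, FreeGroup.lift_apply_of, fvec_zero, fvec_one, fvec_two,
        fvec_three, pow_two]
      rw [← hrel3]
    · simp only [map_mul, map_inv, map_pow, FreeGroup.lift_apply_of, fvec_zero, fvec_one, fvec_two,
        fvec_three, pow_two, inv_inv]
      rw [← hrel4]
  refine ⟨PresentedGroup.toGroup hrels, ?_, ?_, ?_, ?_, ?_⟩
  · rw [← MonoidHom.range_eq_top, eq_top_iff, ← PresentedGroup.closure_range_of (coxeterGRels 5 p q)]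
    rw [Subgroup.closure_le]
    rintro x ⟨i, rfl⟩
    fin_cases i
    · exact ⟨PresentedGroup.of 2, by simp⟩
    · exact ⟨(PresentedGroup.of 3)⁻¹, by simp⟩
    · refine ⟨(PresentedGroup.of 2 * PresentedGroup.of 2 * ((PresentedGroup.of 3)⁻¹ * (PresentedGroup.of 3)⁻¹)) *
        (PresentedGroup.of 2 * PresentedGroup.of 2 * ((PresentedGroup.of 3)⁻¹ * (PresentedGroup.of 3)⁻¹)), ?_⟩
      simp only [map_mul, map_inv, PresentedGroup.toGroup.of, fvec_two, fvec_three, inv_inv]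
      exact hCgen.symm
  · simp [PresentedGroup.toGroup.of, hAdef]
  · simp [PresentedGroup.toGroup.of, hBdef]
  · simp only [PresentedGroup.toGroup.of, fvec_zero]
    rw [show (-2:ℤ) = -((2:ℕ):ℤ) by norm_num, zpow_neg, zpow_natCast, pow_two]
  · simp only [PresentedGroup.toGroup.of, fvec_one]
    rw [pow_two]
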